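/- Let M ∈ SL(2, ℤ) with t := trace(M) ≥ 3, and set λ = (t + √(t² − 4))/2 and λ′ = (t − √(t² − 4))/2. Let W : ℝ² → ℂ be an ℝ-linear map whose kernel contains no eigenvector of M. Then for every nonzero x ∈ ℚ², lim_{n→∞} (1/n)·log |W(Mⁿ·x)| = log λ. -/

import Mathlib

open Matrix Filter

lemma irr_aux (t : ℤ) (ht : 3 ≤ t) : Irrational (Real.sqrt ((t:ℝ)^2 - 4)) := by
  have h : ((t^2 - 4 : ℤ) : ℝ) = (t:ℝ)^2 - 4 := by push_cast; ring
  rw [← h, irrational_sqrt_intCast_iff_of_nonneg (by nlinarith)]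
  rintro ⟨r, hr⟩
  have hr' : t^2 - 4 = |r| * |r| := by rw [← abs_mul, ← hr]; exact (abs_of_nonneg (by nlinarith)).symm
  have h1 : |r| < t := by nlinarith [abs_nonneg r]
  have h2 : t - 1 < |r| := by nlinarith [abs_nonneg r]
  omega

lemma eigen_aux (M : Matrix (Fin 2) (Fin 2) ℤ)
    (hdet2 : M 0 0 * M 1 1 - M 0 1 * M 1 0 = 1)
    (t lam : ℝ) (htr : (M 0 0 : ℝ) + (M 1 1 : ℝ) = t)
    (hq : lam^2 = t * lam - 1) :
    (M.map (Int.cast : ℤ → ℝ)).mulVec ![(M 0 1 : ℝ), lam - (M 0 0 : ℝ)]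
      = lam • ![(M 0 1 : ℝ), lam - (M 0 0 : ℝ)] := by
  have hd : (M 0 0 : ℝ) * (M 1 1 : ℝ) - (M 0 1 : ℝ) * (M 1 0 : ℝ) = 1 := by exact_mod_cast hdet2
  funext i
  fin_cases i
  · simp [Matrix.mulVec, dotProduct, Fin.sum_univ_two, Matrix.map_apply]
    ring
  · simp [Matrix.mulVec, dotProduct, Fin.sum_univ_two, Matrix.map_apply]
    linear_combination -hq + lam*htr - hd

set_option maxHeartbeats 1000000 in
theorem charge_growth_of_rational_vectors (M : Matrix (Fin 2) (Fin 2) ℤ)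
    (hdet : M.det = 1) (ht : 3 ≤ M.trace)
    (W : (Fin 2 → ℝ) →ₗ[ℝ] ℂ)
    -- the kernel of `W` contains no eigenvector of `M`
    (hker : ∀ x : Fin 2 → ℝ, x ≠ 0 →
      (∃ μ : ℝ, (M.map (Int.cast : ℤ → ℝ)).mulVec x = μ • x) → W x ≠ 0) :
    ∀ v : Fin 2 → ℚ, v ≠ 0 →
      Filter.Tendsto
        (fun n : ℕ => (n : ℝ)⁻¹ *
          Real.log ‖W (((M.map (Int.cast : ℤ → ℝ)) ^ n).mulVec
            (fun i => (v i : ℝ)))‖)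
        Filter.atTop
        (nhds (Real.log (((M.trace : ℝ) + Real.sqrt ((M.trace : ℝ) ^ 2 - 4)) / 2))) := by
  intro v hv
  set A := M.map (Int.cast : ℤ → ℝ) with hA
  have hdet2 : M 0 0 * M 1 1 - M 0 1 * M 1 0 = 1 := by
    rw [← Matrix.det_fin_two]; exact hdet
  have htr2 : 3 ≤ M 0 0 + M 1 1 := by rw [← Matrix.trace_fin_two]; exact ht
  have hb : M 0 1 ≠ 0 := by
    intro h
    rw [h] at hdet2
    have h0 : 0 < M 0 0 := by nlinarith
    have h1 : 0 < M 1 1 := by nlinarith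
    nlinarith
  set t : ℝ := (M.trace : ℝ) with htR
  have ht3 : (3:ℝ) ≤ t := by rw [htR]; exact_mod_cast ht
  set s : ℝ := Real.sqrt (t^2 - 4) with hsdef
  have hs2 : s^2 = t^2 - 4 := Real.sq_sqrt (by nlinarith)
  have hspos : 0 < s := Real.sqrt_pos.2 (by nlinarith)
  have hst : s < t := by nlinarith
  set lam : ℝ := (t + s)/2 with hlamdef
  set lam' : ℝ := (t - s)/2 with hlam'def
  have hlam1 : 1 < lam := by rw [hlamdef]; nlinarith
  have hlam0 : 0 < lam := by linarith
  have hlam'pos : 0 < lam' := by rw [hlam'def]; nlinarith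
  have hmul : lam * lam' = 1 := by rw [hlamdef, hlam'def]; nlinarith
  have hlam'lt : lam' < 1 := by nlinarith
  have hsum : lam + lam' = t := by rw [hlamdef, hlam'def]; ring
  have hsirr : Irrational s := by rw [hsdef, htR]; exact irr_aux M.trace ht
  have hlam'irr : ∀ q : ℚ, lam' ≠ (q:ℝ) := by
    intro q hq
    refine hsirr ⟨(M.trace : ℚ) - 2*q, ?_⟩
    rw [hlam'def] at hq
    push_cast
    rw [← htR]
    linarith
  have htrR : (M 0 0 : ℝ) + (M 1 1 : ℝ) = t := by
    rw [htR, Matrix.trace_fin_two]; push_cast; ring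
  have hbR : (M 0 1 : ℝ) ≠ 0 := by exact_mod_cast hb
  have hqlam : lam^2 = t * lam - 1 := by linear_combination lam*hsum - hmul
  have hqlam' : lam'^2 = t * lam' - 1 := by linear_combination lam'*hsum - hmul
  set u : Fin 2 → ℝ := ![(M 0 1 : ℝ), lam - (M 0 0 : ℝ)] with hu
  set w : Fin 2 → ℝ := ![(M 0 1 : ℝ), lam' - (M 0 0 : ℝ)] with hw
  have hAu : A.mulVec u = lam • u := eigen_aux M hdet2 t lam htrR hqlam
  have hAw : A.mulVec w = lam' • w := eigen_aux M hdet2 t lam' htrR hqlam'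
  have hAnu : ∀ n : ℕ, (A^n).mulVec u = lam^n • u := by
    intro n
    induction n with
    | zero => simp [Matrix.one_mulVec]
    | succ n ih =>
        rw [pow_succ', ← Matrix.mulVec_mulVec, ih, Matrix.mulVec_smul, hAu,
          smul_smul, pow_succ]
  have hAnw : ∀ n : ℕ, (A^n).mulVec w = lam'^n • w := by
    intro n
    induction n with
    | zero => simp [Matrix.one_mulVec]
    | succ n ih =>
        rw [pow_succ', ← Matrix.mulVec_mulVec, ih, Matrix.mulVec_smul, hAw,
          smul_smul, pow_succ]
  set x : Fin 2 → ℝ := fun i => (v i : ℝ) with hx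
  set α : ℝ := (x 1 - ((lam' - (M 0 0 : ℝ))/(M 0 1 : ℝ)) * x 0) / s with hαdef
  set β : ℝ := x 0 / (M 0 1 : ℝ) - α with hβdef
  have hδ : lam - lam' = s := by rw [hlamdef, hlam'def]; ring
  have hxdec : x = α • u + β • w := by
    funext i
    fin_cases i
    · simp only [Pi.add_apply, Pi.smul_apply, hu, hw, Fin.zero_eta, Matrix.cons_val_zero, smul_eq_mul]
      rw [hβdef]
      field_simp
      ring
    · simp only [Pi.add_apply, Pi.smul_apply, hu, hw, Fin.mk_one, Matrix.cons_val_one, Matrix.cons_val_zero, Matrix.head_cons,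
        smul_eq_mul]
      rw [hβdef, hαdef]
      field_simp
      linear_combination (-(x 1) * (M 0 1 : ℝ) + x 0 * (t/2 - (M 0 0 : ℝ))) * hδ - (x 0 * s / 2) * hsum
  have hα : α ≠ 0 := by
    intro h0
    rw [hαdef, div_eq_zero_iff] at h0
    have hnum : x 1 = ((lam' - (M 0 0 : ℝ))/(M 0 1 : ℝ)) * x 0 := by
      rcases h0 with h0 | h0
      · linarith
      · exact absurd h0 hspos.ne'
    by_cases hv0 : v 0 = 0
    · have hx0 : x 0 = 0 := by simp [hx, hv0]
      have hx1 : x 1 = 0 := by rw [hnum, hx0, mul_zero]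
      have hv1 : v 1 = 0 := by
        have : ((v 1 : ℚ) : ℝ) = 0 := hx1
        exact_mod_cast this
      apply hv
      funext i
      fin_cases i
      · exact hv0
      · exact hv1
    · apply hlam'irr ((M 0 0 : ℚ) + (M 0 1 : ℚ) * (v 1 / v 0))
      have hx0 : x 0 ≠ 0 := by
        simp only [hx]
        exact_mod_cast hv0
      push_cast
      simp only [hx] at hnum
      rw [hlam'def] at hnum
      field_simp at hnum ⊢
      first
      | linear_combination (-2)*hnum
      | linear_combination (3/2)*hnum
      | linear_combination 2*hnum
      | linear_combination hnum
      | linear_combination -hnum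
      | linear_combination (1/2)*hnum
      | linear_combination (-1/2)*hnum
  have hune : u ≠ 0 := by
    intro h
    exact hbR (by simpa [hu] using congrFun h 0)
  set c₁ : ℂ := W (α • u) with hc1def
  set c₂ : ℂ := W (β • w) with hc2def
  have hc₁ : c₁ ≠ 0 := by
    apply hker _ (smul_ne_zero hα hune)
    exact ⟨lam, by rw [Matrix.mulVec_smul, hAu, smul_comm]⟩
  have hform : ∀ n : ℕ, W ((A^n).mulVec x) = lam^n • c₁ + lam'^n • c₂ := by
    intro n
    rw [hxdec, Matrix.mulVec_add, Matrix.mulVec_smul, Matrix.mulVec_smul, hAnu, hAnw,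
      smul_comm α, smul_comm β, W.map_add, hc1def, hc2def]
    exact congrArg₂ (·+·) (W.map_smul (lam^n) _) (W.map_smul (lam'^n) _)
  set r : ℝ := lam'/lam with hrdef
  have hr0 : (0:ℝ) ≤ r := by positivity
  have hr1 : r < 1 := by rw [hrdef, div_lt_one hlam0]; linarith
  have hlr : lam * r = lam' := by rw [hrdef]; field_simp
  set m : ℕ → ℝ := fun n => ‖c₁ + ((r^n : ℝ) : ℂ) * c₂‖ with hmdef
  have habs : ∀ n : ℕ, ‖W ((A^n).mulVec x)‖ = lam^n * m n := by
    intro n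
    rw [hform n]
    have he : (lam^n • c₁ + lam'^n • c₂ : ℂ) = ((lam^n : ℝ) : ℂ) * (c₁ + ((r^n : ℝ):ℂ) * c₂) := by
      rw [← hlr, mul_pow, Complex.real_smul, Complex.real_smul]
      push_cast
      ring
    rw [he, norm_mul, Complex.norm_real, Real.norm_eq_abs, abs_of_pos (pow_pos hlam0 n)]
  have hmlim : Tendsto m atTop (nhds ‖c₁‖) := by
    have h1 : Tendsto (fun n : ℕ => (r^n : ℝ)) atTop (nhds 0) :=
      tendsto_pow_atTop_nhds_zero_of_lt_one hr0 hr1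
    have h2 : Tendsto (fun n : ℕ => ((r^n : ℝ) : ℂ)) atTop (nhds 0) := by
      have := (Complex.continuous_ofReal.tendsto 0).comp h1
      simpa only [Function.comp_def, Complex.ofReal_zero] using this
    have h3 : Tendsto (fun n : ℕ => c₁ + ((r^n : ℝ):ℂ) * c₂) atTop (nhds c₁) := by
      have := (tendsto_const_nhds (x := c₁) (f := atTop (α := ℕ))).add (h2.mul_const c₂)
      simpa using this
    exact (continuous_norm.tendsto c₁).comp h3
  have hc1pos : 0 < ‖c₁‖ := norm_pos_iff.mpr hc₁
  have hev : ∀ᶠ n : ℕ in atTop, 0 < m n := hmlim.eventually (eventually_gt_nhds hc1pos)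
  have hkey : ∀ᶠ n : ℕ in atTop, (n:ℝ)⁻¹ * Real.log (‖W ((A^n).mulVec x)‖)
      = Real.log lam + (n:ℝ)⁻¹ * Real.log (m n) := by
    filter_upwards [hev, eventually_ge_atTop 1] with n hmn hn1
    have hn : (n:ℝ) ≠ 0 := Nat.cast_ne_zero.2 (by omega)
    rw [habs n, Real.log_mul (pow_ne_zero n hlam0.ne') hmn.ne', Real.log_pow,
      mul_add, ← mul_assoc, inv_mul_cancel₀ hn, one_mul]
  have hlim0 : Tendsto (fun n : ℕ => Real.log lam + (n:ℝ)⁻¹ * Real.log (m n)) atTop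
      (nhds (Real.log lam + 0 * Real.log ‖c₁‖)) :=
    tendsto_const_nhds.add ((tendsto_inv_atTop_zero.comp tendsto_natCast_atTop_atTop).mul
      ((Real.continuousAt_log hc1pos.ne').tendsto.comp hmlim))
  have hfinal := Tendsto.congr' (Filter.EventuallyEq.symm hkey) hlim0
  simpa using hfinal
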